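/- In the Mallows model with dispersion φ ∈ (0,1), under the uniform prior over linear orders, the Bayesian estimator f_B^1 (selecting the alternatives c maximizing Σ_{V ∈ L_c(C)} Pr(P|V)) is monotone: if c ∈ f_B^1(P) and P' is obtained from P by raising the position of c in one vote, then c ∈ f_B^1(P'). -/

import Mathlib

open Finset

/-- `a` is preferred to `b` in the linear order `V` (positions: 0 = top). -/
def prefers {m : ℕ} (V : Equiv.Perm (Fin m)) (a b : Fin m) : Prop :=
  V.symm a < V.symm b

instance {m : ℕ} (V : Equiv.Perm (Fin m)) (a b : Fin m) : Decidable (prefers V a b) :=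
  inferInstanceAs (Decidable (_ < _))

/-- Kendall-tau distance between two linear orders. -/
def kendall {m : ℕ} (V W : Equiv.Perm (Fin m)) : ℕ :=
  (Finset.univ.filter (fun p : Fin m × Fin m =>
    p.1 < p.2 ∧ ¬ (prefers V p.1 p.2 ↔ prefers W p.1 p.2))).card

/-- Total Kendall-tau distance between a profile and a linear order. -/
def kendallP {m : ℕ} (P : Multiset (Equiv.Perm (Fin m))) (W : Equiv.Perm (Fin m)) : ℕ :=
  (P.map (fun V => kendall V W)).sum

/-- Weighted-majority-graph weight `w_P(a,b)`. -/
def wP {m : ℕ} (P : Multiset (Equiv.Perm (Fin m))) (a b : Fin m) : ℤ :=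
  ((P.filter (fun V => prefers V a b)).card : ℤ)
    - ((P.filter (fun V => prefers V b a)).card : ℤ)

/-- Mallows likelihood of a profile `P` given ground truth `V` (with normalization). -/
noncomputable def likelihood {m : ℕ} (φ : ℝ) (P : Multiset (Equiv.Perm (Fin m)))
    (V : Equiv.Perm (Fin m)) : ℝ :=
  (P.map (fun U => φ ^ kendall U V /
      ∑ U' : Equiv.Perm (Fin m), φ ^ kendall U' V)).prod

/-- Score of alternative `c`: total likelihood of the linear orders ranking `c` first.
Under the uniform prior, `f_B^1` selects the alternatives maximizing this score. -/
noncomputable def score {m : ℕ} (φ : ℝ) (P : Multiset (Equiv.Perm (Fin m))) (c : Fin m) : ℝ :=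
  ∑ V ∈ Finset.univ.filter (fun V : Equiv.Perm (Fin m) => (V.symm c : ℕ) = 0),
    likelihood φ P V

section Aux

variable {m : ℕ}

lemma prefers_swap (W : Equiv.Perm (Fin m)) {a b : Fin m} (hab : a ≠ b) :
    prefers W b a ↔ ¬ prefers W a b := by
  have hne : W.symm a ≠ W.symm b := fun h => hab (W.symm.injective h)
  simp only [prefers, not_lt]
  exact ⟨le_of_lt, fun h => lt_of_le_of_ne h (fun e => hne e.symm)⟩

lemma not_prefers_self (W : Equiv.Perm (Fin m)) (a : Fin m) : ¬ prefers W a a :=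
  lt_irrefl _

lemma prefers_trans (W : Equiv.Perm (Fin m)) {a b c : Fin m}
    (h1 : prefers W a b) (h2 : prefers W b c) : prefers W a c :=
  lt_trans h1 h2

lemma disagree_swap (W V : Equiv.Perm (Fin m)) {a b : Fin m} (hab : a ≠ b) :
    (¬ (prefers W a b ↔ prefers V a b)) ↔ (¬ (prefers W b a ↔ prefers V b a)) := by
  rw [prefers_swap W hab, prefers_swap V hab]
  tauto

lemma card_above (W : Equiv.Perm (Fin m)) (c : Fin m) :
    (Finset.univ.filter (fun x => prefers W x c)).card = (W.symm c : ℕ) := by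
  have himg : (Finset.univ.filter (fun x => prefers W x c))
      = Finset.image W (Finset.Iio (W.symm c)) := by
    ext x
    simp only [Finset.mem_filter, Finset.mem_univ, true_and, Finset.mem_image,
      Finset.mem_Iio, prefers]
    constructor
    · intro h; exact ⟨W.symm x, by simpa using (Finset.mem_filter.mp h).2, by simp⟩
    · rintro ⟨i, hi, rfl⟩; exact Finset.mem_filter.mpr ⟨Finset.mem_univ _, by simpa using hi⟩
  rw [himg, Finset.card_image_of_injective _ W.injective, Fin.card_Iio]

/-- Number of pairs not involving `c` on which `W` and `V` disagree. -/
def hcnt (c : Fin m) (W V : Equiv.Perm (Fin m)) : ℕ :=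
  (Finset.univ.filter (fun p : Fin m × Fin m =>
    p.1 < p.2 ∧ (p.1 ≠ c ∧ p.2 ≠ c) ∧ ¬ (prefers W p.1 p.2 ↔ prefers V p.1 p.2))).card

/-- Number of alternatives `x ≠ c` such that `W` and `V` disagree on `{x, c}`. -/
def gcnt (c : Fin m) (W V : Equiv.Perm (Fin m)) : ℕ :=
  (Finset.univ.filter (fun x : Fin m =>
    x ≠ c ∧ ¬ (prefers W x c ↔ prefers V x c))).card

lemma kendall_split (c : Fin m) (W V : Equiv.Perm (Fin m)) :
    kendall W V = hcnt c W V + gcnt c W V := by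
  classical
  set S : Finset (Fin m × Fin m) := Finset.univ.filter (fun p : Fin m × Fin m =>
    p.1 < p.2 ∧ ¬ (prefers W p.1 p.2 ↔ prefers V p.1 p.2)) with hS
  have hsplit := Finset.card_filter_add_card_filter_not
    (s := S) (p := fun p : Fin m × Fin m => p.1 ≠ c ∧ p.2 ≠ c)
  have h1 : S.filter (fun p : Fin m × Fin m => p.1 ≠ c ∧ p.2 ≠ c)
      = Finset.univ.filter (fun p : Fin m × Fin m =>
        p.1 < p.2 ∧ (p.1 ≠ c ∧ p.2 ≠ c) ∧ ¬ (prefers W p.1 p.2 ↔ prefers V p.1 p.2)) := by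
    rw [hS, Finset.filter_filter]
    apply Finset.filter_congr
    intro p _
    tauto
  have h2 : (S.filter (fun p : Fin m × Fin m => ¬ (p.1 ≠ c ∧ p.2 ≠ c))).card = gcnt c W V := by
    apply Finset.card_bij'
      (i := fun p _ => if p.1 = c then p.2 else p.1)
      (j := fun x _ => if x < c then (x, c) else (c, x))
    · intro p hp
      simp only [hS, Finset.mem_filter, Finset.mem_univ, true_and, not_and_or,
        not_ne_iff] at hp
      obtain ⟨⟨hlt, hdis⟩, hc⟩ := hp
      rcases hc with h | h
      · subst h
        have hne : p.2 ≠ p.1 := ne_of_gt hlt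
        simp only [if_pos rfl, Finset.mem_filter, Finset.mem_univ, true_and, gcnt]
        exact ⟨hne, (disagree_swap W V (ne_of_lt hlt)).mp hdis⟩
      · subst h
        have hne : p.1 ≠ p.2 := ne_of_lt hlt
        simp only [if_neg hne, Finset.mem_filter, Finset.mem_univ, true_and, gcnt]
        exact ⟨hne, hdis⟩
    · intro x hx
      simp only [gcnt, Finset.mem_filter, Finset.mem_univ, true_and] at hx
      obtain ⟨hne, hdis⟩ := hx
      rcases lt_or_gt_of_ne hne with h | h
      · simp only [if_pos h, hS, Finset.mem_filter, Finset.mem_univ, true_and]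
        exact ⟨⟨h, hdis⟩, by simp⟩
      · simp only [if_neg (not_lt.mpr (le_of_lt h)), hS, Finset.mem_filter,
          Finset.mem_univ, true_and]
        exact ⟨⟨h, (disagree_swap W V hne).mp hdis⟩, by simp⟩
    · intro p hp
      simp only [hS, Finset.mem_filter, Finset.mem_univ, true_and, not_and_or,
        not_ne_iff] at hp
      obtain ⟨⟨hlt, _⟩, hc⟩ := hp
      rcases hc with h | h
      · have : p.1 = c := h
        simp only [if_pos this, if_neg (not_lt.mpr (le_of_lt (this ▸ hlt)))]
        rw [← this]
      · have hne : p.1 ≠ c := by rw [← h]; exact ne_of_lt hlt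
        simp only [if_neg hne, if_pos (h ▸ hlt)]
        rw [← h]
    · intro x hx
      simp only [gcnt, Finset.mem_filter, Finset.mem_univ, true_and] at hx
      rcases lt_or_gt_of_ne hx.1 with h | h
      · simp [if_pos h, ne_of_lt h]
      · simp [if_neg (not_lt.mpr (le_of_lt h))]
  rw [kendall, ← hsplit, h1, h2, hcnt]

lemma gcnt_first (c : Fin m) (W V : Equiv.Perm (Fin m)) (hV : (V.symm c : ℕ) = 0) :
    gcnt c W V = (W.symm c : ℕ) := by
  have hfalse : ∀ x : Fin m, ¬ prefers V x c := by
    intro x hx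
    simp only [prefers] at hx
    omega
  have : (Finset.univ.filter (fun x : Fin m =>
      x ≠ c ∧ ¬ (prefers W x c ↔ prefers V x c)))
      = Finset.univ.filter (fun x => prefers W x c) := by
    apply Finset.filter_congr
    intro x _
    constructor
    · intro ⟨_, hd⟩
      by_contra hw
      exact hd ⟨fun h => absurd h hw, fun h => absurd h (hfalse x)⟩
    · intro hw
      refine ⟨fun he => not_prefers_self W c (he ▸ hw), fun hd => ?_⟩
      exact hfalse x (hd.mp hw)
  rw [gcnt, this, card_above]

end Aux

theorem fB1_monotone {m : ℕ} (φ : ℝ) (hφ0 : 0 < φ) (hφ1 : φ < 1)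
    (P : Multiset (Equiv.Perm (Fin m))) (c : Fin m)
    (U U' : Equiv.Perm (Fin m)) (hU : U ∈ P)
    (hraise : U'.symm c < U.symm c)
    (hothers : ∀ a b : Fin m, a ≠ c → b ≠ c → (prefers U' a b ↔ prefers U a b))
    (hopt : ∀ b : Fin m, score φ P b ≤ score φ P c) :
    ∀ b : Fin m, score φ (U' ::ₘ P.erase U) b ≤ score φ (U' ::ₘ P.erase U) c := by
  classical
  intro b
  set n₁ : ℕ := (U.symm c : ℕ) with hn₁
  set n₂ : ℕ := (U'.symm c : ℕ) with hn₂
  have hn : n₂ < n₁ := hraise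
  -- the subset property: anything above c in U' is above c in U
  have habove : ∀ x : Fin m, prefers U' x c → prefers U x c := by
    by_contra hcon
    push_neg at hcon
    obtain ⟨x, hx', hx⟩ := hcon
    have hxc : x ≠ c := fun h => not_prefers_self U' c (h ▸ hx')
    have hsub : (Finset.univ.filter (fun y => prefers U y c))
        ⊆ Finset.univ.filter (fun y => prefers U' y c) := by
      intro y hy
      simp only [Finset.mem_filter, Finset.mem_univ, true_and] at hy ⊢
      have hyc : y ≠ c := fun h => not_prefers_self U c (h ▸ hy)
      have hyx : prefers U y x := by
        simp only [prefers, not_lt] at hy hx ⊢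
        exact lt_of_lt_of_le hy hx
      exact prefers_trans U' ((hothers y x hyc hxc).mpr hyx) hx'
    have := Finset.card_le_card hsub
    rw [card_above, card_above] at this
    omega
  -- hcnt doesn't depend on whether the vote is U or U'
  have hh : ∀ V : Equiv.Perm (Fin m), hcnt c U V = hcnt c U' V := by
    intro V
    unfold hcnt
    congr 1
    apply Finset.filter_congr
    intro p _
    constructor
    · rintro ⟨h1, ⟨h2, h3⟩, h4⟩
      exact ⟨h1, ⟨h2, h3⟩, fun hd => h4 ((hothers p.1 p.2 h2 h3).symm.trans hd)⟩
    · rintro ⟨h1, ⟨h2, h3⟩, h4⟩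
      exact ⟨h1, ⟨h2, h3⟩, fun hd => h4 ((hothers p.1 p.2 h2 h3).trans hd)⟩
  -- bound on gcnt
  have hg : ∀ V : Equiv.Perm (Fin m), gcnt c U V + n₂ ≤ gcnt c U' V + n₁ := by
    intro V
    set A := Finset.univ.filter (fun x : Fin m =>
      x ≠ c ∧ ¬ (prefers U x c ↔ prefers V x c)) with hA
    set A' := Finset.univ.filter (fun x : Fin m =>
      x ≠ c ∧ ¬ (prefers U' x c ↔ prefers V x c)) with hA'
    set D := (Finset.univ.filter (fun y => prefers U y c))
        \ (Finset.univ.filter (fun y => prefers U' y c)) with hD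
    have hsub2 : (Finset.univ.filter (fun y => prefers U' y c))
        ⊆ Finset.univ.filter (fun y => prefers U y c) := by
      intro y hy
      simp only [Finset.mem_filter, Finset.mem_univ, true_and] at hy ⊢
      exact habove y hy
    have hDcard : D.card + n₂ = n₁ := by
      rw [hD, Finset.card_sdiff_of_subset hsub2, card_above, card_above]
      omega
    have hAsub : A ⊆ A' ∪ D := by
      intro x hx
      simp only [hA, Finset.mem_filter, Finset.mem_univ, true_and] at hx
      obtain ⟨hxc, hdis⟩ := hx
      by_cases hsame : prefers U x c ↔ prefers U' x c
      · apply Finset.mem_union_left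
        simp only [hA', Finset.mem_filter, Finset.mem_univ, true_and]
        exact ⟨hxc, fun hd => hdis (hsame.trans hd)⟩
      · apply Finset.mem_union_right
        simp only [hD, Finset.mem_sdiff, Finset.mem_filter, Finset.mem_univ, true_and]
        constructor
        · by_contra hu
          exact hsame ⟨fun h => absurd h hu, fun h => habove x h⟩
        · intro h'
          exact hsame ⟨fun _ => h', fun h => habove x h⟩
    have hcard : A.card ≤ A'.card + D.card :=
      le_trans (Finset.card_le_card hAsub) (Finset.card_union_le _ _)
    simp only [gcnt, ← hA, ← hA']
    omega
  -- kendall comparisons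
  have hkle : ∀ V : Equiv.Perm (Fin m), kendall U V + n₂ ≤ kendall U' V + n₁ := by
    intro V
    rw [kendall_split c U V, kendall_split c U' V, hh V]
    have := hg V
    omega
  have hkeq : ∀ V : Equiv.Perm (Fin m), (V.symm c : ℕ) = 0 →
      kendall U V + n₂ = kendall U' V + n₁ := by
    intro V hV
    rw [kendall_split c U V, kendall_split c U' V, hh V,
      gcnt_first c U V hV, gcnt_first c U' V hV, ← hn₁, ← hn₂]
    omega
  -- likelihood facts
  have hZpos : ∀ V : Equiv.Perm (Fin m),
      0 < ∑ W : Equiv.Perm (Fin m), φ ^ kendall W V := by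
    intro V
    apply Finset.sum_pos
    · intro W _; exact pow_pos hφ0 _
    · exact Finset.univ_nonempty
  have hrest_nonneg : ∀ V : Equiv.Perm (Fin m), 0 ≤ likelihood φ (P.erase U) V := by
    intro V
    apply Multiset.prod_nonneg
    intro x hx
    simp only [Multiset.mem_map] at hx
    obtain ⟨W, _, rfl⟩ := hx
    positivity
  have hlik : ∀ (X : Equiv.Perm (Fin m)) (Q : Multiset (Equiv.Perm (Fin m)))
      (V : Equiv.Perm (Fin m)), likelihood φ (X ::ₘ Q) V
        = (φ ^ kendall X V / ∑ W : Equiv.Perm (Fin m), φ ^ kendall W V)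
          * likelihood φ Q V := by
    intro X Q V
    simp [likelihood, Multiset.map_cons, Multiset.prod_cons]
  have hP : U ::ₘ P.erase U = P := Multiset.cons_erase hU
  set Q := P.erase U with hQ
  -- termwise pow inequality / equality
  have hkey1 : φ ^ n₁ * score φ (U' ::ₘ Q) b ≤ φ ^ n₂ * score φ P b := by
    rw [score, score, ← hP, Finset.mul_sum, Finset.mul_sum]
    apply Finset.sum_le_sum
    intro V _
    rw [hlik U' (Q) V, hlik U (Q) V]
    have hpow : φ ^ (kendall U' V + n₁) ≤ φ ^ (kendall U V + n₂) :=
      pow_le_pow_of_le_one (le_of_lt hφ0) (le_of_lt hφ1) (hkle V)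
    rw [pow_add, pow_add] at hpow
    have h1 : 0 ≤ likelihood φ (Q) V / ∑ W : Equiv.Perm (Fin m), φ ^ kendall W V :=
      div_nonneg (hrest_nonneg V) (le_of_lt (hZpos V))
    calc φ ^ n₁ * (φ ^ kendall U' V / (∑ W : Equiv.Perm (Fin m), φ ^ kendall W V)
            * likelihood φ (Q) V)
        = (φ ^ kendall U' V * φ ^ n₁)
            * (likelihood φ (Q) V / ∑ W : Equiv.Perm (Fin m), φ ^ kendall W V) := by
          ring
      _ ≤ (φ ^ kendall U V * φ ^ n₂)
            * (likelihood φ (Q) V / ∑ W : Equiv.Perm (Fin m), φ ^ kendall W V) :=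
          mul_le_mul_of_nonneg_right hpow h1
      _ = φ ^ n₂ * (φ ^ kendall U V / (∑ W : Equiv.Perm (Fin m), φ ^ kendall W V)
            * likelihood φ (Q) V) := by ring
  have hkey2 : φ ^ n₁ * score φ (U' ::ₘ Q) c = φ ^ n₂ * score φ P c := by
    rw [score, score, ← hP, Finset.mul_sum, Finset.mul_sum]
    apply Finset.sum_congr rfl
    intro V hV
    simp only [Finset.mem_filter, Finset.mem_univ, true_and] at hV
    rw [hlik U' (Q) V, hlik U (Q) V]
    have hpow : φ ^ (kendall U' V + n₁) = φ ^ (kendall U V + n₂) := by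
      rw [(hkeq V hV).symm]
    rw [pow_add, pow_add] at hpow
    calc φ ^ n₁ * (φ ^ kendall U' V / (∑ W : Equiv.Perm (Fin m), φ ^ kendall W V)
            * likelihood φ (Q) V)
        = (φ ^ kendall U' V * φ ^ n₁)
            * (likelihood φ (Q) V / ∑ W : Equiv.Perm (Fin m), φ ^ kendall W V) := by
          ring
      _ = (φ ^ kendall U V * φ ^ n₂)
            * (likelihood φ (Q) V / ∑ W : Equiv.Perm (Fin m), φ ^ kendall W V) := by
          rw [hpow]
      _ = φ ^ n₂ * (φ ^ kendall U V / (∑ W : Equiv.Perm (Fin m), φ ^ kendall W V)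
            * likelihood φ (Q) V) := by ring
  have hchain : φ ^ n₁ * score φ (U' ::ₘ Q) b
      ≤ φ ^ n₁ * score φ (U' ::ₘ Q) c := by
    calc φ ^ n₁ * score φ (U' ::ₘ Q) b
        ≤ φ ^ n₂ * score φ P b := hkey1
      _ ≤ φ ^ n₂ * score φ P c :=
          mul_le_mul_of_nonneg_left (hopt b) (le_of_lt (pow_pos hφ0 n₂))
      _ = φ ^ n₁ * score φ (U' ::ₘ Q) c := hkey2.symm
  exact le_of_mul_le_mul_left hchain (pow_pos hφ0 n₁)
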